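/- Let M ∈ ℝ^{n×n} be nonnegative and row substochastic, and suppose its associated digraph (edge j→i when M_{ij} > 0, i.e., following matrix indexing along rows) is such that from every node i with row sum equal to 1 there is a directed path (following nonzero entries) to some node j whose row sum is strictly less than 1. Then ρ(M) < 1. -/

import Mathlib

open Matrix Filter Polynomial

noncomputable def specRadC {m : Type*} [Fintype m] [DecidableEq m]
    (M : Matrix m m ℂ) : ℝ :=
  sSup ((fun z : ℂ => ‖z‖) '' spectrum ℂ M)

noncomputable def specRadR {m : Type*} [Fintype m] [DecidableEq m]
    (M : Matrix m m ℝ) : ℝ :=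
  specRadC (M.map (algebraMap ℝ ℂ))

section aux

variable {n : ℕ} (M : Matrix (Fin n) (Fin n) ℝ)

lemma pow_entry_nonneg (hpos : ∀ i j, 0 ≤ M i j) :
    ∀ (k : ℕ) i j, 0 ≤ (M ^ k) i j := by
  intro k
  induction k with
  | zero => intro i j; simp [Matrix.one_apply]; positivity
  | succ k ih =>
      intro i j
      rw [pow_succ, Matrix.mul_apply]
      exact Finset.sum_nonneg fun t _ => mul_nonneg (ih i t) (hpos t j)

lemma rowsum_pow_le_one (hpos : ∀ i j, 0 ≤ M i j) (hrow : ∀ i, ∑ j, M i j ≤ 1) :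
    ∀ (k : ℕ) i, ∑ j, (M ^ k) i j ≤ 1 := by
  intro k
  induction k with
  | zero => intro i; simp [Matrix.one_apply]
  | succ k ih =>
      intro i
      have : ∑ j, (M ^ (k+1)) i j = ∑ t, (M ^ k) i t * ∑ j, M t j := by
        simp_rw [pow_succ, Matrix.mul_apply, Finset.mul_sum]
        rw [Finset.sum_comm]
      rw [this]
      calc ∑ t, (M ^ k) i t * ∑ j, M t j ≤ ∑ t, (M ^ k) i t * 1 :=
            Finset.sum_le_sum fun t _ =>
              mul_le_mul_of_nonneg_left (hrow t) (pow_entry_nonneg M hpos k i t)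
        _ ≤ 1 := by simpa using ih i

lemma rowsum_pow_antitone (hpos : ∀ i j, 0 ≤ M i j) (hrow : ∀ i, ∑ j, M i j ≤ 1) :
    ∀ (k : ℕ) i, ∑ j, (M ^ (k+1)) i j ≤ ∑ j, (M ^ k) i j := by
  intro k i
  have : ∑ j, (M ^ (k+1)) i j = ∑ t, (M ^ k) i t * ∑ j, M t j := by
    simp_rw [pow_succ, Matrix.mul_apply, Finset.mul_sum]
    rw [Finset.sum_comm]
  rw [this]
  calc ∑ t, (M ^ k) i t * ∑ j, M t j ≤ ∑ t, (M ^ k) i t * 1 :=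
        Finset.sum_le_sum fun t _ =>
          mul_le_mul_of_nonneg_left (hrow t) (pow_entry_nonneg M hpos k i t)
    _ = ∑ j, (M ^ k) i j := by simp

lemma rowsum_pow_le (hpos : ∀ i j, 0 ≤ M i j) (hrow : ∀ i, ∑ j, M i j ≤ 1)
    {k l : ℕ} (h : k ≤ l) (i : Fin n) : ∑ j, (M ^ l) i j ≤ ∑ j, (M ^ k) i j := by
  induction l with
  | zero => simp_all
  | succ l ih =>
      rcases Nat.lt_or_ge k (l+1) with h' | h'
      · exact (rowsum_pow_antitone M hpos hrow l i).trans (ih (Nat.lt_succ_iff.mp h'))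
      · have : k = l + 1 := le_antisymm h h'
        subst this; rfl

lemma rowsum_step (hpos : ∀ i j, 0 ≤ M i j) (hrow : ∀ i, ∑ j, M i j ≤ 1)
    {k : ℕ} {i j : Fin n} (hij : 0 < M i j) (hj : ∑ t, (M ^ k) j t < 1) :
    ∑ t, (M ^ (k+1)) i t < 1 := by
  have hrw : ∑ t, (M ^ (k+1)) i t = ∑ u, M i u * ∑ t, (M ^ k) u t := by
    simp_rw [pow_succ', Matrix.mul_apply, Finset.mul_sum]
    rw [Finset.sum_comm]
  rw [hrw]
  have hlt : ∑ u, M i u * ∑ t, (M ^ k) u t < ∑ u, M i u * 1 := by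
    apply Finset.sum_lt_sum
    · intro u _
      exact mul_le_mul_of_nonneg_left (rowsum_pow_le_one M hpos hrow k u) (hpos i u)
    · exact ⟨j, Finset.mem_univ j, by
        exact mul_lt_mul_of_pos_left hj hij⟩
  calc ∑ u, M i u * ∑ t, (M ^ k) u t < ∑ u, M i u * 1 := hlt
    _ ≤ 1 := by simpa using hrow i

lemma exists_pow_rowsum_lt (hpos : ∀ i j, 0 ≤ M i j) (hrow : ∀ i, ∑ j, M i j ≤ 1)
    {i j : Fin n} (hj : ∑ t, M j t < 1)
    (hpath : Relation.ReflTransGen (fun a c => 0 < M a c) i j) :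
    ∃ k, 1 ≤ k ∧ ∑ t, (M ^ k) i t < 1 := by
  induction hpath using Relation.ReflTransGen.head_induction_on with
  | refl => exact ⟨1, le_refl 1, by simpa [pow_one] using hj⟩
  | head hab _ ih =>
      obtain ⟨k, hk1, hk⟩ := ih
      exact ⟨k + 1, by omega, rowsum_step M hpos hrow hab hk⟩

end aux

/-- A nonnegative row-substochastic matrix such that every node with row sum
equal to `1` has a directed path (along positive entries) to a node with row
sum strictly less than `1` has spectral radius `< 1`. -/
theorem specRad_lt_one_of_path_to_deficient {n : ℕ}
    (M : Matrix (Fin n) (Fin n) ℝ)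
    (hpos : ∀ i j, 0 ≤ M i j)
    (hrow : ∀ i, ∑ j, M i j ≤ 1)
    (hpath : ∀ i, ∑ j, M i j = 1 →
      ∃ j, (∑ t, M j t) < 1 ∧
        Relation.ReflTransGen (fun a c => 0 < M a c) i j) :
    specRadR M < 1 := by
  rcases Nat.eq_zero_or_pos n with hn | hn
  · subst hn
    have hs : spectrum ℂ (M.map (algebraMap ℝ ℂ)) = ∅ := by
      ext μ
      simp only [Set.mem_empty_iff_false, iff_false, spectrum.mem_iff]
      exact fun h => h (isUnit_of_subsingleton _)
    simp [specRadR, specRadC, hs, Real.sSup_empty]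
  -- every node has a power with deficient row sum
  have key : ∀ i : Fin n, ∃ k, 1 ≤ k ∧ ∑ t, (M ^ k) i t < 1 := by
    intro i
    rcases lt_or_eq_of_le (hrow i) with h | h
    · exact ⟨1, le_refl 1, by simpa [pow_one] using h⟩
    · obtain ⟨j, hj, hp⟩ := hpath i h
      exact exists_pow_rowsum_lt M hpos hrow hj hp
  choose f hf1 hflt using key
  haveI : Nonempty (Fin n) := ⟨⟨0, hn⟩⟩
  set K : ℕ := Finset.univ.sup f + 1 with hK
  have hK1 : 1 ≤ K := by omega
  have hKlt : ∀ i, ∑ t, (M ^ K) i t < 1 := by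
    intro i
    have : ∑ t, (M ^ K) i t ≤ ∑ t, (M ^ (f i)) i t :=
      rowsum_pow_le M hpos hrow (Nat.le_succ_of_le (Finset.le_sup (Finset.mem_univ i))) i
    exact lt_of_le_of_lt this (hflt i)
  set c : ℝ := Finset.univ.sup' Finset.univ_nonempty (fun i => ∑ t, (M ^ K) i t) with hc
  have hclt : c < 1 := by
    rw [hc, Finset.sup'_lt_iff]
    exact fun i _ => hKlt i
  have hc0 : 0 ≤ c := by
    refine le_trans ?_ (Finset.le_sup' (fun i => ∑ t, (M ^ K) i t)
      (Finset.mem_univ (Classical.arbitrary (Fin n))))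
    exact Finset.sum_nonneg fun t _ => pow_entry_nonneg M hpos K _ t
  -- bound each element of the spectrum
  set A := M.map (algebraMap ℝ ℂ) with hA
  have habs : ∀ μ ∈ spectrum ℂ A, ‖μ‖ ^ K ≤ c := by
    intro μ hμ
    have hpow : μ ^ K ∈ spectrum ℂ (A ^ K) :=
      spectrum.pow_image_subset A K ⟨μ, hμ, rfl⟩
    have hAK : A ^ K = (M ^ K).map (algebraMap ℝ ℂ) := by
      rw [hA]
      have := map_pow (RingHom.mapMatrix (algebraMap ℝ ℂ) :
        Matrix (Fin n) (Fin n) ℝ →+* Matrix (Fin n) (Fin n) ℂ) M K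
      simpa [RingHom.mapMatrix_apply] using this.symm
    rw [hAK] at hpow
    set B := (M ^ K).map (algebraMap ℝ ℂ) with hB
    have heig : Module.End.HasEigenvalue (Matrix.toLin' B) (μ ^ K) := by
      have hEq : (Matrix.toLinAlgEquiv' B : (Fin n → ℂ) →ₗ[ℂ] (Fin n → ℂ)) =
          Matrix.toLin' B :=
        LinearMap.ext fun v => by
          rw [Matrix.toLinAlgEquiv'_apply, Matrix.toLin'_apply]
      rw [Module.End.hasEigenvalue_iff_mem_spectrum, ← hEq,
        AlgEquiv.spectrum_eq Matrix.toLinAlgEquiv']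
      exact hpow
    obtain ⟨k, hk⟩ := eigenvalue_mem_ball heig
    rw [mem_closedBall_iff_norm'] at hk
    have hnorm : ‖μ ^ K‖ ≤ ∑ j, ‖B k j‖ := by
      have : ‖μ ^ K‖ ≤ ‖B k k‖ + ∑ j ∈ Finset.univ.erase k, ‖B k j‖ := by
        calc ‖μ ^ K‖ = ‖B k k - (B k k - μ ^ K)‖ := by ring_nf
          _ ≤ ‖B k k‖ + ‖B k k - μ ^ K‖ := norm_sub_le _ _
          _ ≤ ‖B k k‖ + ∑ j ∈ Finset.univ.erase k, ‖B k j‖ := by linarith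
      rwa [← Finset.add_sum_erase _ _ (Finset.mem_univ k)]
    have hBnorm : ∀ j, ‖B k j‖ = (M ^ K) k j := by
      intro j
      rw [hB]
      simp only [Matrix.map_apply]
      rw [show (algebraMap ℝ ℂ) ((M ^ K) k j) = ((M ^ K) k j : ℂ) from rfl,
        Complex.norm_real, Real.norm_eq_abs, abs_of_nonneg (pow_entry_nonneg M hpos K k j)]
    have : ‖μ ^ K‖ ≤ ∑ j, (M ^ K) k j := by
      rw [← Finset.sum_congr rfl fun j _ => hBnorm j]; exact hnorm
    have hle : ∑ j, (M ^ K) k j ≤ c :=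
      Finset.le_sup' (fun i => ∑ t, (M ^ K) i t) (Finset.mem_univ k)
    calc ‖μ‖ ^ K = ‖μ ^ K‖ := by rw [norm_pow]
      _ ≤ ∑ j, (M ^ K) k j := this
      _ ≤ c := hle
  -- conclude via a uniform bound `c ^ (1/K)`
  set b : ℝ := c ^ ((K : ℝ)⁻¹) with hb
  have hb0 : 0 ≤ b := Real.rpow_nonneg hc0 _
  have hb1 : b < 1 := Real.rpow_lt_one hc0 hclt (by positivity)
  have hbound : ∀ x ∈ (fun z : ℂ => ‖z‖) '' spectrum ℂ A, x ≤ b := by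
    rintro x ⟨μ, hμ, rfl⟩
    have h1 : ‖μ‖ ^ K ≤ c := habs μ hμ
    have h2 : (‖μ‖ ^ K : ℝ) ^ ((K : ℝ)⁻¹) ≤ b :=
      Real.rpow_le_rpow (by positivity) h1 (by positivity)
    have hKne : (K : ℝ) ≠ 0 := Nat.cast_ne_zero.mpr (by omega)
    have h3 : (‖μ‖ ^ K : ℝ) ^ ((K : ℝ)⁻¹) = ‖μ‖ := by
      rw [← Real.rpow_natCast (‖μ‖) K,
        ← Real.rpow_mul (norm_nonneg _), mul_inv_cancel₀ hKne, Real.rpow_one]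
    rwa [h3] at h2
  calc specRadR M = sSup ((fun z : ℂ => ‖z‖) '' spectrum ℂ A) := rfl
    _ ≤ b := Real.sSup_le hbound hb0
    _ < 1 := hb1
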